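/- There exists a functorial retraction ⟨GS, ε, μ⟩ of the category of ⟨∨,0⟩-semilattices with ⟨∨,0⟩-embeddings to the full subcategory of ultra-simple-atomistic ⟨∨,0⟩-semilattices: (1) for every ⟨∨,0⟩-semilattice K, GS(K) is an ultra-simple-atomistic ⟨∨,0⟩-semilattice, ε_K : K → GS(K) is a ⟨∨,0⟩-embedding, μ_K : GS(K) → K is a ⟨∨,0⟩-homomorphism, and μ_K ∘ ε_K = id_K; (2) for every ⟨∨,0⟩-embedding f : K → L, GS(f) : GS(K) → GS(L) is a ⟨∨,0⟩-embedding with GS(id_K) = id_{GS(K)}, GS(g ∘ f) = GS(g) ∘ GS(f), GS(f) ∘ ε_K = ε_L ∘ f, and μ_L ∘ GS(f) = f ∘ μ_K; (3) if K is a finite lattice, then GS(K) is a finite lattice-simple lattice. -/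

import Mathlib

universe u

/-- A `⟨∨,0⟩`-homomorphism: preserves binary joins and the least element. -/
def IsSupBotHom {α β : Type*} [SemilatticeSup α] [OrderBot α] [SemilatticeSup β] [OrderBot β]
    (f : α → β) : Prop :=
  (∀ a b : α, f (a ⊔ b) = f a ⊔ f b) ∧ f ⊥ = ⊥

/-- A `⟨∨,0⟩`-embedding: an injective `⟨∨,0⟩`-homomorphism. -/
def IsSupBotEmb {α β : Type*} [SemilatticeSup α] [OrderBot α] [SemilatticeSup β] [OrderBot β]
    (f : α → β) : Prop :=
  Function.Injective f ∧ IsSupBotHom f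

/-- Bundled `⟨∨,0⟩`-semilattices. -/
structure SL : Type (u + 1) where
  carrier : Type u
  [instSup : SemilatticeSup carrier]
  [instBot : OrderBot carrier]

attribute [instance] SL.instSup SL.instBot

instance : CoeSort SL.{u} (Type u) := ⟨SL.carrier⟩

/-- A `⟨∨,0⟩`-subsemilattice: a subset containing `⊥` and closed under binary joins. -/
def IsSubSemilat {α : Type*} [SemilatticeSup α] [OrderBot α] (s : Set α) : Prop :=
  ⊥ ∈ s ∧ ∀ ⦃x⦄, x ∈ s → ∀ ⦃y⦄, y ∈ s → x ⊔ y ∈ s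

/-- A partial order is a lattice order if all binary joins and meets exist. -/
def IsLatticeOrder (β : Type*) [PartialOrder β] : Prop :=
  ∀ a b : β, (∃ j, IsLUB {a, b} j) ∧ (∃ m, IsGLB {a, b} m)

/-- Lattice-simplicity: exactly two lattice congruences, i.e. nontrivial and every
equivalence relation compatible with binary joins and meets is equality or full. -/
def OrderLatticeSimple (β : Type*) [PartialOrder β] : Prop :=
  Nontrivial β ∧
    ∀ r : β → β → Prop, Equivalence r →
      (∀ a b c d ja jb : β, IsLUB {a, c} ja → IsLUB {b, d} jb → r a b → r c d → r ja jb) →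
      (∀ a b c d ma mb : β, IsGLB {a, c} ma → IsGLB {b, d} mb → r a b → r c d → r ma mb) →
      ((∀ a b : β, r a b ↔ a = b) ∨ (∀ a b : β, r a b))

/-- A partial order with least element is atomistic if every element is a join of
finitely many atoms. -/
def OrderAtomistic (β : Type*) [PartialOrder β] : Prop :=
  ∃ bot : β, IsBot bot ∧
    ∀ x : β, ∃ t : Finset β, (∀ a ∈ t, bot < a ∧ ∀ c, c < a → c = bot) ∧ IsLUB ↑t x

/-- A `⟨∨,0⟩`-semilattice is ultra-simple-atomistic if it is the union of a directed
family of finite `⟨∨,0⟩`-subsemilattices, each of which is a lattice-simple atomistic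
lattice under the induced ordering. -/
def UltraSimpleAtomistic (α : Type*) [SemilatticeSup α] [OrderBot α] : Prop :=
  ∃ F : Set (Set α), DirectedOn (· ⊆ ·) F ∧ (∀ x : α, ∃ s ∈ F, x ∈ s) ∧
    ∀ s ∈ F, IsSubSemilat s ∧ s.Finite ∧ IsLatticeOrder ↥s ∧
      OrderLatticeSimple ↥s ∧ OrderAtomistic ↥s

namespace GSwork

variable {K : Type u} [SemilatticeSup K] [OrderBot K]

inductive GSc (K : Type u) [SemilatticeSup K] [OrderBot K] : Type u
  | el : K → GSc K
  | atm : (x : K) → x ≠ ⊥ → Fin 3 → GSc K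
  | wa : Fin 3 → GSc K
  | ts : GSc K

namespace GSc

def gle : GSc K → GSc K → Prop
  | .el x, .el y => x ≤ y
  | .el x, .atm _ _ _ => x = ⊥
  | .el x, .wa _ => x = ⊥
  | .el x, .ts => x = ⊥
  | .atm x _ _, .el y => x ≤ y
  | .atm x _ i, .atm y _ j => x = y ∧ i = j
  | .atm _ _ _, .wa _ => False
  | .atm _ _ _, .ts => False
  | .wa _, .el y => y ≠ ⊥
  | .wa i, .wa j => i = j
  | .wa _, .atm _ _ _ => False
  | .wa _, .ts => True
  | .ts, .el y => y ≠ ⊥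
  | .ts, .ts => True
  | .ts, .atm _ _ _ => False
  | .ts, .wa _ => False

instance : PartialOrder (GSc K) where
  le := gle
  le_refl a := by cases a <;> simp [gle]
  le_trans a b c hab hbc := by
    cases a <;> cases b <;> cases c <;> simp_all [gle] <;>
      first
        | exact le_trans hab hbc
        | (subst hab; simp_all)
        | (rintro rfl; simp_all)
        | skip
  le_antisymm a b hab hba := by
    cases a <;> cases b <;> simp_all [gle]
    exact le_antisymm hab hba

@[simp] lemma el_le_el {x y : K} : (el x : GSc K) ≤ el y ↔ x ≤ y := Iff.rfl
@[simp] lemma el_le_atm {x y : K} {h i} : (el x : GSc K) ≤ atm y h i ↔ x = ⊥ := Iff.rfl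
@[simp] lemma el_le_wa {x : K} {i} : (el x : GSc K) ≤ wa i ↔ x = ⊥ := Iff.rfl
@[simp] lemma el_le_ts {x : K} : (el x : GSc K) ≤ ts ↔ x = ⊥ := Iff.rfl
@[simp] lemma atm_le_el {x y : K} {h i} : (atm x h i : GSc K) ≤ el y ↔ x ≤ y := Iff.rfl
@[simp] lemma atm_le_atm {x y : K} {h h' i j} :
    (atm x h i : GSc K) ≤ atm y h' j ↔ x = y ∧ i = j := Iff.rfl
@[simp] lemma atm_le_wa {x : K} {h i j} : ¬ (atm x h i : GSc K) ≤ wa j := id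
@[simp] lemma atm_le_ts {x : K} {h i} : ¬ (atm x h i : GSc K) ≤ ts := id
@[simp] lemma wa_le_el {x : K} {i} : (wa i : GSc K) ≤ el x ↔ x ≠ ⊥ := Iff.rfl
@[simp] lemma wa_le_wa {i j} : (wa i : GSc K) ≤ wa j ↔ i = j := Iff.rfl
@[simp] lemma wa_le_atm {x : K} {h i j} : ¬ (wa j : GSc K) ≤ atm x h i := id
@[simp] lemma wa_le_ts {i} : (wa i : GSc K) ≤ ts := trivial
@[simp] lemma ts_le_el {x : K} : (ts : GSc K) ≤ el x ↔ x ≠ ⊥ := Iff.rfl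
@[simp] lemma ts_le_ts : (ts : GSc K) ≤ ts := trivial
@[simp] lemma ts_le_atm {x : K} {h i} : ¬ (ts : GSc K) ≤ atm x h i := id
@[simp] lemma ts_le_wa {i} : ¬ (ts : GSc K) ≤ wa i := id

instance : OrderBot (GSc K) where
  bot := el ⊥
  bot_le a := by cases a <;> simp

@[simp] lemma bot_def : (⊥ : GSc K) = el ⊥ := rfl


open Classical in
noncomputable def gsup : GSc K → GSc K → GSc K
  | .el x, .el y => .el (x ⊔ y)
  | .el x, .atm y h j => if x = ⊥ then .atm y h j else .el (x ⊔ y)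
  | .el x, .wa i => if x = ⊥ then .wa i else .el x
  | .el x, .ts => if x = ⊥ then .ts else .el x
  | .atm y h j, .el x => if x = ⊥ then .atm y h j else .el (x ⊔ y)
  | .atm x h i, .atm y _ j => if x = y ∧ i = j then .atm x h i else .el (x ⊔ y)
  | .atm x _ _, .wa _ => .el x
  | .atm x _ _, .ts => .el x
  | .wa i, .el x => if x = ⊥ then .wa i else .el x
  | .wa _, .atm x _ _ => .el x
  | .wa i, .wa j => if i = j then .wa i else .ts
  | .wa _, .ts => .ts
  | .ts, .el x => if x = ⊥ then .ts else .el x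
  | .ts, .atm x _ _ => .el x
  | .ts, .wa _ => .ts
  | .ts, .ts => .ts

noncomputable instance : SemilatticeSup (GSc K) where
  sup := gsup
  le_sup_left a b := by
    cases a <;> cases b <;> simp only [gsup] <;> (try split_ifs) <;>
      simp_all <;> first | exact le_sup_left | rfl
  le_sup_right a b := by
    cases a <;> cases b <;> simp only [gsup] <;> (try split_ifs) <;>
      simp_all <;> first | exact le_sup_right | rfl
  sup_le a b c hac hbc := by
    cases a <;> cases b <;> cases c <;> simp only [gsup] <;> (try split_ifs) <;>
      simp_all <;>
      first
        | exact sup_le hac hbc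
        | exact sup_le hac.1.le hbc
        | exact sup_le hac hbc.1.le
        | skip


@[simp] lemma el_sup_el {x y : K} : (el x : GSc K) ⊔ el y = el (x ⊔ y) := rfl

lemma atm_sup_atm_ne {x y : K} {h h' i j} (hne : ¬ (x = y ∧ i = j)) :
    (atm x h i : GSc K) ⊔ atm y h' j = el (x ⊔ y) := by
  show gsup _ _ = _
  rw [gsup, if_neg hne]

@[simp] lemma atm_sup_ts {x : K} {h i} : (atm x h i : GSc K) ⊔ ts = el x := rfl
@[simp] lemma ts_sup_atm {x : K} {h i} : (ts : GSc K) ⊔ atm x h i = el x := rfl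

lemma wa_sup_wa_ne {i j} (hne : i ≠ j) : (wa i : GSc K) ⊔ wa j = ts := by
  show gsup _ _ = _
  rw [gsup, if_neg hne]

lemma le_atm_cases {z : GSc K} {x h i} (hz : z ≤ atm x h i) : z = ⊥ ∨ z = atm x h i := by
  cases z <;> simp_all

lemma le_wa_cases {z : GSc K} {i} (hz : z ≤ wa i) : z = ⊥ ∨ z = wa i := by
  cases z <;> simp_all

lemma le_ts_cases {z : GSc K} (hz : z ≤ ts) : z = ⊥ ∨ (∃ i, z = wa i) ∨ z = ts := by
  cases z <;> simp_all

section helpers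

variable {β : Type*} [Preorder β]

lemma isGLB_pair_intro {a b m : β} (h1 : m ≤ a) (h2 : m ≤ b)
    (h3 : ∀ z, z ≤ a → z ≤ b → z ≤ m) : IsGLB {a, b} m := by
  constructor
  · rintro c (rfl | rfl)
    exacts [h1, h2]
  · intro z hz
    exact h3 z (hz (Set.mem_insert _ _)) (hz (Set.mem_insert_of_mem _ rfl))

lemma isLUB_pair_intro {a b m : β} (h1 : a ≤ m) (h2 : b ≤ m)
    (h3 : ∀ z, a ≤ z → b ≤ z → m ≤ z) : IsLUB {a, b} m := by
  constructor
  · rintro c (rfl | rfl)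
    exacts [h1, h2]
  · intro z hz
    exact h3 z (hz (Set.mem_insert _ _)) (hz (Set.mem_insert_of_mem _ rfl))

lemma isGLB_pair_of_le {a b : β} (h : a ≤ b) : IsGLB {a, b} a :=
  isGLB_pair_intro le_rfl h fun _ hz _ => hz

lemma isGLB_pair_of_le' {a b : β} (h : a ≤ b) : IsGLB {b, a} a :=
  isGLB_pair_intro h le_rfl fun _ _ hz => hz

end helpers

lemma isGLB_pair_bot {β : Type*} [Preorder β] [OrderBot β] {b : β} :
    IsGLB {(⊥ : β), b} ⊥ :=
  isGLB_pair_intro le_rfl bot_le fun _ hz _ => hz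

lemma isGLB_atm_not_le {p : GSc K} {x h i} (hnle : ¬ atm x h i ≤ p) :
    IsGLB {p, atm x h i} (⊥ : GSc K) := by
  refine isGLB_pair_intro bot_le bot_le fun z hz1 hz2 => ?_
  rcases le_atm_cases hz2 with rfl | rfl
  · exact le_rfl
  · exact absurd hz1 hnle

lemma isGLB_wa_not_le {p : GSc K} {i} (hnle : ¬ wa i ≤ p) :
    IsGLB {p, wa i} (⊥ : GSc K) := by
  refine isGLB_pair_intro bot_le bot_le fun z hz1 hz2 => ?_
  rcases le_wa_cases hz2 with rfl | rfl
  · exact le_rfl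
  · exact absurd hz1 hnle

lemma gsc_atomistic : OrderAtomistic (GSc K) := by
  classical
  refine ⟨⊥, fun z => bot_le, fun z => ?_⟩
  have hatom : ∀ (x : K) (h : x ≠ ⊥) (i : Fin 3),
      (⊥ : GSc K) < atm x h i ∧ ∀ c : GSc K, c < atm x h i → c = ⊥ := by
    intro x h i
    constructor
    · exact lt_of_le_of_ne bot_le (fun e => by simp at e)
    · intro c hc
      rcases le_atm_cases hc.le with rfl | rfl
      · rfl
      · exact absurd rfl hc.ne
  have hwatom : ∀ i : Fin 3, (⊥ : GSc K) < wa i ∧ ∀ c : GSc K, c < wa i → c = ⊥ := by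
    intro i
    constructor
    · exact lt_of_le_of_ne bot_le (fun e => by simp at e)
    · intro c hc
      rcases le_wa_cases hc.le with rfl | rfl
      · rfl
      · exact absurd rfl hc.ne
  cases z with
  | el x =>
    by_cases hx : x = ⊥
    · subst hx
      exact ⟨∅, by simp, by simpa using isLUB_empty⟩
    · refine ⟨{atm x hx 0, atm x hx 1}, ?_, ?_⟩
      · intro a ha
        simp only [Finset.mem_insert, Finset.mem_singleton] at ha
        rcases ha with rfl | rfl <;> exact hatom x hx _
      · rw [Finset.coe_insert, Finset.coe_singleton]
        refine isLUB_pair_intro (by simp) (by simp) fun z hz1 hz2 => ?_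
        cases z <;> simp_all
        exact absurd (hz1.2.trans hz2.symm) (by decide)
  | atm x h i =>
    exact ⟨{atm x h i}, by simpa using hatom x h i, by simpa using isLUB_singleton⟩
  | wa i =>
    exact ⟨{wa i}, by simpa using hwatom i, by simpa using isLUB_singleton⟩
  | ts =>
    refine ⟨{wa 0, wa 1}, ?_, ?_⟩
    · intro a ha
      simp only [Finset.mem_insert, Finset.mem_singleton] at ha
      rcases ha with rfl | rfl <;> exact hwatom _
    · rw [Finset.coe_insert, Finset.coe_singleton]
      refine isLUB_pair_intro (by simp) (by simp) fun z hz1 hz2 => ?_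
      cases z <;> simp_all
      exact absurd (hz1.trans hz2.symm) (by decide)


lemma fin3_pick : ∀ i : Fin 3, ∃ j k : Fin 3, j ≠ i ∧ k ≠ i ∧ j ≠ k := by decide

lemma gsc_simple : OrderLatticeSimple (GSc K) := by
  classical
  refine ⟨⟨⊥, ts, fun e => by simp at e⟩, ?_⟩
  intro r hr hJ hM
  by_cases hex : ∃ a b : GSc K, r a b ∧ a ≠ b
  · right
    obtain ⟨a, b, hab, hne⟩ := hex
    have rsup : ∀ a b c d : GSc K, r a b → r c d → r (a ⊔ c) (b ⊔ d) :=
      fun a b c d h1 h2 => hJ a b c d _ _ isLUB_pair isLUB_pair h1 h2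
    obtain ⟨p, q, hpq, hrpq⟩ : ∃ p q : GSc K, p < q ∧ r p q := by
      by_cases h1 : a ≤ b
      · exact ⟨a, b, lt_of_le_of_ne h1 hne, hab⟩
      by_cases h2 : b ≤ a
      · exact ⟨b, a, lt_of_le_of_ne h2 (Ne.symm hne), hr.symm hab⟩
      refine ⟨b, a ⊔ b, lt_of_le_of_ne le_sup_right fun e => h1 (e ▸ le_sup_left), ?_⟩
      have := rsup a b b b hab (hr.refl b)
      rw [sup_idem] at this
      exact hr.symm this
    -- cell propagation for the a-atoms
    have cellA : ∀ (x : K) (h : x ≠ ⊥) (i : Fin 3), r ⊥ (atm x h i) → r ⊥ (el x) := by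
      intro x h i h0
      obtain ⟨j, k, hji, hki, hjk⟩ := fin3_pick i
      have h1 : ∀ j : Fin 3, j ≠ i → r (atm x h j) (el x) := by
        intro j hji
        have := rsup ⊥ (atm x h i) (atm x h j) (atm x h j) h0 (hr.refl _)
        rwa [bot_sup_eq, atm_sup_atm_ne (fun hc => hji (hc.2.symm)), sup_idem] at this
      refine hM (atm x h j) (el x) (atm x h k) (el x) ⊥ (el x) ?_ ?_ (h1 j hji) (h1 k hki)
      · exact isGLB_atm_not_le (fun hle => hjk hle.2.symm)
      · rw [Set.pair_eq_singleton]; exact isGLB_singleton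
    -- cell propagation for the w-atoms
    have cellW : ∀ i : Fin 3, r ⊥ (wa i) → r ⊥ (ts : GSc K) := by
      intro i h0
      obtain ⟨j, k, hji, hki, hjk⟩ := fin3_pick i
      have h1 : ∀ j : Fin 3, j ≠ i → r (wa j) (ts : GSc K) := by
        intro j hji
        have := rsup ⊥ (wa i) (wa j) (wa j) h0 (hr.refl _)
        rwa [bot_sup_eq, wa_sup_wa_ne (Ne.symm hji)] at this
      refine hM (wa j) ts (wa k) ts ⊥ ts ?_ ?_ (h1 j hji) (h1 k hki)
      · exact isGLB_wa_not_le (fun hle => hjk (wa_le_wa.mp hle).symm)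
      · rw [Set.pair_eq_singleton]; exact isGLB_singleton
    have elts : ∀ (x : K), x ≠ ⊥ → r ⊥ (el x) → r ⊥ (ts : GSc K) := by
      intro x hx h0
      exact hM ⊥ (el x) ts ts ⊥ ts isGLB_pair_bot
        (isGLB_pair_of_le' (ts_le_el.mpr hx)) h0 (hr.refl _)
    have hts : r ⊥ (ts : GSc K) := by
      cases q with
      | el x =>
        have hx : x ≠ ⊥ := by
          rintro rfl
          exact not_lt_bot hpq
        have hi : ∃ i : Fin 3, ¬ atm x hx i ≤ p := by
          cases p with
          | el y =>
            refine ⟨0, fun hle => hpq.ne ?_⟩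
            have : y = x := le_antisymm hpq.le hle
            rw [this]
          | atm y hy j =>
            obtain ⟨i, hij⟩ : ∃ i : Fin 3, i ≠ j := ⟨j + 1, by omega⟩
            exact ⟨i, fun hle => hij hle.2⟩
          | wa j => exact ⟨0, fun hle => hle⟩
          | ts => exact ⟨0, fun hle => hle⟩
        obtain ⟨i, hnle⟩ := hi
        have h0 : r ⊥ (atm x hx i) :=
          hM p (el x) (atm x hx i) (atm x hx i) ⊥ (atm x hx i) (isGLB_atm_not_le hnle)
            (isGLB_pair_of_le' (atm_le_el.mpr le_rfl)) hrpq (hr.refl _)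
        exact elts x hx (cellA x hx i h0)
      | atm x hx i =>
        have hp : p = ⊥ := by
          rcases le_atm_cases hpq.le with h | h
          · exact h
          · exact absurd h hpq.ne
        subst hp
        exact elts x hx (cellA x hx i hrpq)
      | wa i =>
        have hp : p = ⊥ := by
          rcases le_wa_cases hpq.le with h | h
          · exact h
          · exact absurd h hpq.ne
        subst hp
        exact cellW i hrpq
      | ts =>
        rcases le_ts_cases hpq.le with h | ⟨i, h⟩ | h
        · subst h; exact hrpq
        · subst h
          obtain ⟨j, k, hji, hki, hjk⟩ := fin3_pick i
          have h0 : r ⊥ (wa j) :=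
            hM (wa i) ts (wa j) (wa j) ⊥ (wa j) (isGLB_wa_not_le fun hle => hji (wa_le_wa.mp hle))
              (isGLB_pair_of_le' wa_le_ts) hrpq (hr.refl _)
          exact cellW j h0
        · exact absurd h hpq.ne
    have hel : ∀ x : K, r ⊥ (el x) := by
      intro x
      by_cases hx : x = ⊥
      · subst hx; exact hr.refl _
      · have h1 : ∀ i : Fin 3, r (atm x hx i) (el x) := by
          intro i
          have := rsup (atm x hx i) (atm x hx i) ⊥ ts (hr.refl _) hts
          rwa [sup_bot_eq, atm_sup_ts] at this
        refine hM (atm x hx 0) (el x) (atm x hx 1) (el x) ⊥ (el x) ?_ ?_ (h1 0) (h1 1)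
        · exact isGLB_atm_not_le (fun hle => by exact absurd hle.2 (by decide))
        · rw [Set.pair_eq_singleton]; exact isGLB_singleton
    have hatmr : ∀ (x : K) (h : x ≠ ⊥) (i : Fin 3), r ⊥ (atm x h i) := by
      intro x h i
      exact hM ⊥ (el x) (atm x h i) (atm x h i) ⊥ (atm x h i) isGLB_pair_bot
        (isGLB_pair_of_le' (atm_le_el.mpr le_rfl)) (hel x) (hr.refl _)
    have hwar : ∀ i : Fin 3, r ⊥ ((wa i : GSc K)) := by
      intro i
      exact hM ⊥ ts (wa i) (wa i) ⊥ (wa i) isGLB_pair_bot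
        (isGLB_pair_of_le' wa_le_ts) hts (hr.refl _)
    have hall : ∀ z : GSc K, r ⊥ z := by
      intro z
      cases z with
      | el x => exact hel x
      | atm x h i => exact hatmr x h i
      | wa i => exact hwar i
      | ts => exact hts
    exact fun u v => hr.trans (hr.symm (hall u)) (hall v)
  · left
    intro a b
    constructor
    · intro hrab
      by_contra hne
      exact hex ⟨a, b, hrab, hne⟩
    · rintro rfl
      exact hr.refl a


lemma lb_pair {β : Type*} [Preorder β] {x y z : β} (h1 : z ≤ x) (h2 : z ≤ y) :
    z ∈ lowerBounds {x, y} := by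
  rintro c (rfl | rfl)
  exacts [h1, h2]

lemma finite_glb {β : Type*} [SemilatticeSup β] [OrderBot β] [Finite β] (x y : β) :
    ∃ m, IsGLB {x, y} m := by
  classical
  cases nonempty_fintype β
  refine ⟨(Finset.univ.filter (fun w => w ≤ x ∧ w ≤ y)).sup id, ?_, ?_⟩
  · rintro c (rfl | rfl)
    · exact Finset.sup_le fun w hw => ((Finset.mem_filter.mp hw).2).1
    · exact Finset.sup_le fun w hw => ((Finset.mem_filter.mp hw).2).2
  · intro z hz
    exact Finset.le_sup (f := id)
      (Finset.mem_filter.mpr ⟨Finset.mem_univ z,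
        hz (Set.mem_insert _ _), hz (Set.mem_insert_of_mem _ rfl)⟩)

lemma gsc_latticeOrder (hm : ∀ a b : K, ∃ m, IsGLB {a, b} m) : IsLatticeOrder (GSc K) := by
  classical
  have glb_el_el : ∀ x y : K, ∃ m, IsGLB ({el x, el y} : Set (GSc K)) m := by
    intro x y
    obtain ⟨m, hm1, hm2⟩ := hm x y
    by_cases hx : x = ⊥
    · subst hx; exact ⟨⊥, isGLB_pair_bot⟩
    by_cases hy : y = ⊥
    · subst hy
      rw [Set.pair_comm]
      exact ⟨⊥, isGLB_pair_bot⟩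
    have hmx : m ≤ x := hm1 (Set.mem_insert _ _)
    have hmy : m ≤ y := hm1 (Set.mem_insert_of_mem _ rfl)
    by_cases hmb : m = ⊥
    · refine ⟨ts, isGLB_pair_intro (ts_le_el.mpr hx) (ts_le_el.mpr hy) fun z hz1 hz2 => ?_⟩
      cases z with
      | el w =>
        have : w ≤ m := hm2 (lb_pair hz1 hz2)
        simp [le_bot_iff.mp (hmb ▸ this)]
      | atm w hw i =>
        have : w ≤ m := hm2 (lb_pair hz1 hz2)
        exact absurd (le_bot_iff.mp (hmb ▸ this)) hw
      | wa i => exact wa_le_ts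
      | ts => exact ts_le_ts
    · refine ⟨el m, isGLB_pair_intro (el_le_el.mpr hmx) (el_le_el.mpr hmy) fun z hz1 hz2 => ?_⟩
      cases z with
      | el w => exact el_le_el.mpr (hm2 (lb_pair hz1 hz2))
      | atm w hw i => exact atm_le_el.mpr (hm2 (lb_pair hz1 hz2))
      | wa i => exact wa_le_el.mpr hmb
      | ts => exact ts_le_el.mpr hmb
  have glb_el_atm : ∀ (x y : K) (hy : y ≠ ⊥) (j : Fin 3),
      ∃ m, IsGLB ({el x, atm y hy j} : Set (GSc K)) m := by
    intro x y hy j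
    by_cases hyx : y ≤ x
    · exact ⟨atm y hy j, isGLB_pair_of_le' (atm_le_el.mpr hyx)⟩
    · exact ⟨⊥, isGLB_atm_not_le fun hle => hyx hle⟩
  have glb_el_wa : ∀ (x : K) (i : Fin 3), ∃ m, IsGLB ({el x, wa i} : Set (GSc K)) m := by
    intro x i
    by_cases hx : x = ⊥
    · subst hx; exact ⟨⊥, isGLB_pair_bot⟩
    · exact ⟨wa i, isGLB_pair_of_le' (wa_le_el.mpr hx)⟩
  have glb_el_ts : ∀ x : K, ∃ m, IsGLB ({el x, ts} : Set (GSc K)) m := by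
    intro x
    by_cases hx : x = ⊥
    · subst hx; exact ⟨⊥, isGLB_pair_bot⟩
    · exact ⟨ts, isGLB_pair_of_le' (ts_le_el.mpr hx)⟩
  have glb_atm_ts : ∀ (x : K) (hx : x ≠ ⊥) (i : Fin 3),
      ∃ m, IsGLB ({atm x hx i, ts} : Set (GSc K)) m := by
    intro x hx i
    refine ⟨⊥, isGLB_pair_intro bot_le bot_le fun z hz1 hz2 => ?_⟩
    rcases le_atm_cases hz1 with rfl | rfl
    · exact le_rfl
    · exact absurd hz2 atm_le_ts
  have glb_wa_ts : ∀ i : Fin 3, ∃ m, IsGLB ({wa i, ts} : Set (GSc K)) m :=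
    fun i => ⟨wa i, isGLB_pair_of_le wa_le_ts⟩
  intro a b
  refine ⟨⟨a ⊔ b, isLUB_pair⟩, ?_⟩
  cases a with
  | el x =>
    cases b with
    | el y => exact glb_el_el x y
    | atm y hy j => exact glb_el_atm x y hy j
    | wa i => exact glb_el_wa x i
    | ts => exact glb_el_ts x
  | atm x hx i =>
    cases b with
    | el y =>
      rw [Set.pair_comm]
      exact glb_el_atm y x hx i
    | atm y hy j =>
      by_cases he : atm x hx i = atm y hy j
      · rw [← he, Set.pair_eq_singleton]
        exact ⟨atm x hx i, isGLB_singleton⟩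
      · refine ⟨⊥, isGLB_atm_not_le fun hle => he ?_⟩
        obtain ⟨rfl, rfl⟩ := atm_le_atm.mp hle
        rfl
    | wa j => exact ⟨⊥, isGLB_wa_not_le fun hle => wa_le_atm hle⟩
    | ts => exact glb_atm_ts x hx i
  | wa i =>
    cases b with
    | el y =>
      rw [Set.pair_comm]
      exact glb_el_wa y i
    | atm y hy j =>
      rw [Set.pair_comm]
      exact ⟨⊥, isGLB_wa_not_le fun hle => wa_le_atm hle⟩
    | wa j =>
      by_cases he : i = j
      · subst he
        rw [Set.pair_eq_singleton]
        exact ⟨wa i, isGLB_singleton⟩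
      · exact ⟨⊥, isGLB_wa_not_le fun hle => he (wa_le_wa.mp hle).symm⟩
    | ts => exact glb_wa_ts i
  | ts =>
    cases b with
    | el y =>
      rw [Set.pair_comm]
      exact glb_el_ts y
    | atm y hy j =>
      rw [Set.pair_comm]
      exact glb_atm_ts y hy j
    | wa j =>
      rw [Set.pair_comm]
      exact glb_wa_ts j
    | ts =>
      rw [Set.pair_eq_singleton]
      exact ⟨ts, isGLB_singleton⟩


lemma gsc_finite [Finite K] : Finite (GSc K) := by
  have : Function.Injective (fun z : GSc K =>
      (fun z : GSc K => match z with
        | el x => (Sum.inl x : K ⊕ ((K × Fin 3) ⊕ (Fin 3 ⊕ Unit)))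
        | atm x _ i => Sum.inr (Sum.inl (x, i))
        | wa i => Sum.inr (Sum.inr (Sum.inl i))
        | ts => Sum.inr (Sum.inr (Sum.inr ()))) z) := by
    intro a b hab
    cases a <;> cases b <;> simp_all
  exact Finite.of_injective _ this

section map

variable {L : Type u} [SemilatticeSup L] [OrderBot L]
variable {f : K → L}

def gmap (f : K → L) (hbot : ∀ x : K, f x = ⊥ ↔ x = ⊥) : GSc K → GSc L
  | .el x => .el (f x)
  | .atm x h i => .atm (f x) (fun e => h ((hbot x).mp e)) i
  | .wa i => .wa i
  | .ts => .ts

lemma gmap_inj (hinj : Function.Injective f) (hbot : ∀ x : K, f x = ⊥ ↔ x = ⊥) :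
    Function.Injective (gmap f hbot) := by
  intro a b hab
  cases a <;> cases b <;> simp_all [gmap]
  · exact hinj hab
  · obtain ⟨e, rfl⟩ := hab
    obtain rfl := hinj e
    rfl

lemma gmap_le_iff (hinj : Function.Injective f) (hbot : ∀ x : K, f x = ⊥ ↔ x = ⊥)
    (hle : ∀ x y : K, f x ≤ f y ↔ x ≤ y) {a b : GSc K} :
    gmap f hbot a ≤ gmap f hbot b ↔ a ≤ b := by
  cases a <;> cases b <;>
    simp only [gmap, el_le_el, el_le_atm, el_le_wa, el_le_ts, atm_le_el, atm_le_atm,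
      wa_le_el, wa_le_wa, ts_le_el] <;>
    first
      | exact hle _ _
      | exact hbot _
      | exact not_congr (hbot _)
      | exact Iff.rfl
      | exact ⟨fun ⟨e, e2⟩ => ⟨hinj e, e2⟩, fun ⟨e, e2⟩ => ⟨congrArg f e, e2⟩⟩

lemma gmap_sup (hinj : Function.Injective f) (hsup : ∀ a b : K, f (a ⊔ b) = f a ⊔ f b)
    (hbot : ∀ x : K, f x = ⊥ ↔ x = ⊥) (a b : GSc K) :
    gmap f hbot (a ⊔ b) = gmap f hbot a ⊔ gmap f hbot b := by
  classical
  have hnb : ∀ x : K, ¬ x = ⊥ → ¬ f x = ⊥ := fun x hx e => hx ((hbot x).mp e)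
  cases a with
  | el x =>
    cases b with
    | el y => simp [gmap, hsup]
    | atm y h j =>
      show gmap f hbot (gsup _ _) = gsup _ _
      simp only [gmap, gsup]
      by_cases hx : x = ⊥
      · rw [if_pos hx, if_pos ((hbot x).mpr hx)]
      · rw [if_neg hx, if_neg (hnb x hx)]
        simp [gmap, hsup]
    | wa i =>
      show gmap f hbot (gsup _ _) = gsup _ _
      simp only [gmap, gsup]
      by_cases hx : x = ⊥
      · rw [if_pos hx, if_pos ((hbot x).mpr hx)]
      · rw [if_neg hx, if_neg (hnb x hx)]
    | ts =>
      show gmap f hbot (gsup _ _) = gsup _ _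
      simp only [gmap, gsup]
      by_cases hx : x = ⊥
      · rw [if_pos hx, if_pos ((hbot x).mpr hx)]
      · rw [if_neg hx, if_neg (hnb x hx)]
  | atm y h j =>
    cases b with
    | el x =>
      show gmap f hbot (gsup _ _) = gsup _ _
      simp only [gmap, gsup]
      by_cases hx : x = ⊥
      · rw [if_pos hx, if_pos ((hbot x).mpr hx)]
      · rw [if_neg hx, if_neg (hnb x hx)]
        simp [gmap, hsup]
    | atm y' h' j' =>
      show gmap f hbot (gsup _ _) = gsup _ _
      simp only [gmap, gsup]
      by_cases hc : y = y' ∧ j = j'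
      · rw [if_pos hc, if_pos ⟨congrArg f hc.1, hc.2⟩]
      · rw [if_neg hc, if_neg (fun e => hc ⟨hinj e.1, e.2⟩)]
        simp [gmap, hsup]
    | wa i => rfl
    | ts => rfl
  | wa i =>
    cases b with
    | el x =>
      show gmap f hbot (gsup _ _) = gsup _ _
      simp only [gmap, gsup]
      by_cases hx : x = ⊥
      · rw [if_pos hx, if_pos ((hbot x).mpr hx)]
      · rw [if_neg hx, if_neg (hnb x hx)]
    | atm y h j => rfl
    | wa i' =>
      show gmap f hbot (gsup _ _) = gsup _ _
      simp only [gmap, gsup]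
      by_cases hc : i = i'
      · rw [if_pos hc, if_pos hc]
      · rw [if_neg hc, if_neg hc]
    | ts => rfl
  | ts =>
    cases b with
    | el x =>
      show gmap f hbot (gsup _ _) = gsup _ _
      simp only [gmap, gsup]
      by_cases hx : x = ⊥
      · rw [if_pos hx, if_pos ((hbot x).mpr hx)]
      · rw [if_neg hx, if_neg (hnb x hx)]
    | atm y h j => rfl
    | wa i => rfl
    | ts => rfl

end map


def gmu : GSc K → K
  | .el x => x
  | .atm x _ _ => x
  | .wa _ => ⊥
  | .ts => ⊥

@[simp] lemma gmu_bot : gmu (⊥ : GSc K) = ⊥ := rfl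

lemma gmu_sup (a b : GSc K) : gmu (a ⊔ b) = gmu a ⊔ gmu b := by
  classical
  cases a <;> cases b <;> show gmu (gsup _ _) = _ <;> simp only [gsup] <;>
    (try split_ifs) <;> simp_all [gmu]
  exact sup_comm _ _

section map2

variable {L : Type u} [SemilatticeSup L] [OrderBot L] {M : Type u}
  [SemilatticeSup M] [OrderBot M]

lemma gmap_id (h : ∀ x : K, (id : K → K) x = ⊥ ↔ x = ⊥) : gmap id h = id := by
  funext z
  cases z <;> rfl

lemma gmap_comp {f : K → L} {g : L → M} (hf : ∀ x : K, f x = ⊥ ↔ x = ⊥)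
    (hg : ∀ x : L, g x = ⊥ ↔ x = ⊥) (hgf : ∀ x : K, (g ∘ f) x = ⊥ ↔ x = ⊥) :
    gmap (g ∘ f) hgf = gmap g hg ∘ gmap f hf := by
  funext z
  cases z <;> rfl

lemma gmu_gmap {f : K → L} (hbot : ∀ x : K, f x = ⊥ ↔ x = ⊥) (z : GSc K) :
    gmu (gmap f hbot z) = f (gmu z) := by
  cases z with
  | el x => rfl
  | atm x h i => rfl
  | wa i => exact ((hbot ⊥).mpr rfl).symm
  | ts => exact ((hbot ⊥).mpr rfl).symm

end map2


section transfer

variable {β γ : Type*} [PartialOrder β] [PartialOrder γ]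

lemma iso_isLUB_pair (e : β ≃o γ) {a c j : β} (h : IsLUB {a, c} j) : IsLUB {e a, e c} (e j) := by
  rw [← Set.image_pair]
  exact e.isLUB_image'.mpr h

lemma iso_isGLB_pair (e : β ≃o γ) {a c j : β} (h : IsGLB {a, c} j) : IsGLB {e a, e c} (e j) := by
  rw [← Set.image_pair]
  exact e.isGLB_image'.mpr h

lemma iso_latticeOrder (e : β ≃o γ) (h : IsLatticeOrder β) : IsLatticeOrder γ := by
  intro a b
  obtain ⟨⟨j, hj⟩, ⟨m, hm⟩⟩ := h (e.symm a) (e.symm b)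
  constructor
  · refine ⟨e j, ?_⟩
    have := iso_isLUB_pair e hj
    rwa [e.apply_symm_apply, e.apply_symm_apply] at this
  · refine ⟨e m, ?_⟩
    have := iso_isGLB_pair e hm
    rwa [e.apply_symm_apply, e.apply_symm_apply] at this

lemma iso_atomistic (e : β ≃o γ) (h : OrderAtomistic β) : OrderAtomistic γ := by
  classical
  obtain ⟨bot, hbot, hx⟩ := h
  refine ⟨e bot, fun y => ?_, fun y => ?_⟩
  · have := e.le_iff_le.mpr (hbot (e.symm y))
    rwa [e.apply_symm_apply] at this
  · obtain ⟨t, ht, hlub⟩ := hx (e.symm y)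
    refine ⟨t.image e, ?_, ?_⟩
    · intro a ha
      obtain ⟨a', ha', rfl⟩ := Finset.mem_image.mp ha
      obtain ⟨h1, h2⟩ := ht a' ha'
      refine ⟨e.strictMono h1, fun c hc => ?_⟩
      have hc' : e.symm c < a' := by
        have := e.symm.strictMono hc
        rwa [e.symm_apply_apply] at this
      have := h2 _ hc'
      rw [← e.apply_symm_apply c, this]
    · have := e.isLUB_image'.mpr hlub
      rwa [← Finset.coe_image, e.apply_symm_apply] at this

lemma iso_simple (e : β ≃o γ) (h : OrderLatticeSimple β) : OrderLatticeSimple γ := by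
  obtain ⟨⟨a, b, hab⟩, h2⟩ := h
  refine ⟨⟨e a, e b, fun ee => hab (e.injective ee)⟩, ?_⟩
  intro r hr hJ hM
  rcases h2 (fun u v => r (e u) (e v))
      ⟨fun u => hr.refl _, fun h => hr.symm h, fun h1 h2 => hr.trans h1 h2⟩
      (fun a b c d ja jb hja hjb h1 h2 =>
        hJ (e a) (e b) (e c) (e d) (e ja) (e jb) (iso_isLUB_pair e hja)
          (iso_isLUB_pair e hjb) h1 h2)
      (fun a b c d ma mb hma hmb h1 h2 =>
        hM (e a) (e b) (e c) (e d) (e ma) (e mb) (iso_isGLB_pair e hma)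
          (iso_isGLB_pair e hmb) h1 h2) with hEq | hTot
  · left
    intro u v
    have := hEq (e.symm u) (e.symm v)
    rw [e.apply_symm_apply, e.apply_symm_apply] at this
    rw [this]
    exact ⟨fun h' => by rw [← e.apply_symm_apply u, ← e.apply_symm_apply v, h'],
      fun h' => by rw [h']⟩
  · right
    intro u v
    have := hTot (e.symm u) (e.symm v)
    rwa [e.apply_symm_apply, e.apply_symm_apply] at this

end transfer

section jc

def jc (s : Set K) : Set K := {x | ∃ t : Finset K, ↑t ⊆ s ∧ x = t.sup id}

lemma subset_jc {s : Set K} : s ⊆ jc s :=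
  fun a ha => ⟨{a}, by simpa using ha, by simp⟩

lemma jc_subsemilat (s : Set K) : IsSubSemilat (jc s) := by
  classical
  refine ⟨⟨∅, by simp, by simp⟩, ?_⟩
  rintro x ⟨t1, ht1, rfl⟩ y ⟨t2, ht2, rfl⟩
  refine ⟨t1 ∪ t2, ?_, Finset.sup_union.symm⟩
  rw [Finset.coe_union]
  exact Set.union_subset ht1 ht2

lemma jc_mono {s s' : Set K} (h : s ⊆ s') : jc s ⊆ jc s' := by
  rintro x ⟨t, ht, rfl⟩
  exact ⟨t, ht.trans h, rfl⟩

lemma jc_finite {s : Set K} (hs : s.Finite) : (jc s).Finite := by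
  classical
  have hsub : jc s ⊆ (fun t : Finset K => t.sup id) '' {t : Finset K | ↑t ⊆ s} := by
    rintro x ⟨t, ht, rfl⟩
    exact ⟨t, ht, rfl⟩
  refine Set.Finite.subset (Set.Finite.image _ ?_) hsub
  have he : {t : Finset K | ↑t ⊆ s} = (fun t : Finset K => (↑t : Set K)) ⁻¹' {u | u ⊆ s} := rfl
  rw [he]
  exact Set.Finite.preimage (Set.injOn_of_injective Finset.coe_injective) hs.finite_subsets

end jc

section sub

variable {T : Set K}

@[reducible] def subSup (hT : IsSubSemilat T) : SemilatticeSup ↥T :=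
  { (inferInstance : PartialOrder ↥T) with
    sup := fun a b => ⟨a.1 ⊔ b.1, hT.2 a.2 b.2⟩
    le_sup_left := fun a b => (le_sup_left : a.1 ≤ a.1 ⊔ b.1)
    le_sup_right := fun a b => (le_sup_right : b.1 ≤ a.1 ⊔ b.1)
    sup_le := fun a b c h1 h2 => (sup_le h1 h2 : a.1 ⊔ b.1 ≤ c.1) }

@[reducible] def subBot (hT : IsSubSemilat T) : OrderBot ↥T where
  bot := ⟨⊥, hT.1⟩
  bot_le a := (bot_le : (⊥ : K) ≤ a.1)

end sub

lemma gsc_ultra : UltraSimpleAtomistic (GSc K) := by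
  classical
  refine ⟨{s | ∃ T : Set K, IsSubSemilat T ∧ T.Finite ∧ s = gmu ⁻¹' T}, ?_, ?_, ?_⟩
  · rintro s1 ⟨T1, hT1, hf1, rfl⟩ s2 ⟨T2, hT2, hf2, rfl⟩
    refine ⟨gmu ⁻¹' jc (T1 ∪ T2),
      ⟨jc (T1 ∪ T2), jc_subsemilat _, jc_finite (hf1.union hf2), rfl⟩, ?_, ?_⟩
    · exact Set.preimage_mono (Set.subset_union_left.trans subset_jc)
    · exact Set.preimage_mono (Set.subset_union_right.trans subset_jc)
  · intro z
    exact ⟨gmu ⁻¹' jc {gmu z},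
      ⟨jc {gmu z}, jc_subsemilat _, jc_finite (Set.finite_singleton _), rfl⟩,
      subset_jc rfl⟩
  · rintro s ⟨T, hT, hTf, rfl⟩
    letI : SemilatticeSup ↥T := subSup hT
    letI : OrderBot ↥T := subBot hT
    haveI : Finite ↥T := hTf.to_subtype
    set f : ↥T → K := Subtype.val with hf
    have hbot : ∀ x : ↥T, f x = ⊥ ↔ x = ⊥ :=
      fun x => ⟨fun e => Subtype.ext e, fun e => congrArg Subtype.val e⟩
    have hinj : Function.Injective f := Subtype.val_injective
    have hle : ∀ x y : ↥T, f x ≤ f y ↔ x ≤ y := fun x y => Iff.rfl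
    have hmem : ∀ z' : GSc ↥T, gmap f hbot z' ∈ gmu ⁻¹' T := by
      intro z'
      show gmu (gmap f hbot z') ∈ T
      rw [gmu_gmap]
      exact (gmu z').2
    let g : GSc ↥T → ↥(gmu ⁻¹' T) := fun z' => ⟨gmap f hbot z', hmem z'⟩
    have hgbij : Function.Bijective g := by
      constructor
      · intro a b hab
        exact gmap_inj hinj hbot (congrArg Subtype.val hab)
      · rintro ⟨z, hz⟩
        cases z with
        | el x => exact ⟨el ⟨x, hz⟩, rfl⟩
        | atm x h i => exact ⟨atm ⟨x, hz⟩ (fun e => h (congrArg Subtype.val e)) i, rfl⟩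
        | wa i => exact ⟨wa i, rfl⟩
        | ts => exact ⟨ts, rfl⟩
    let e : GSc ↥T ≃o ↥(gmu ⁻¹' T) :=
      { toEquiv := Equiv.ofBijective g hgbij
        map_rel_iff' := fun {a b} => gmap_le_iff hinj hbot hle }
    refine ⟨⟨hT.1, fun a ha b hb => ?_⟩, ?_, ?_, ?_, ?_⟩
    · show gmu (a ⊔ b) ∈ T
      rw [gmu_sup]
      exact hT.2 ha hb
    · have h1 : Finite (GSc ↥T) := gsc_finite
      have h2 : Finite ↥(gmu ⁻¹' T) := Finite.of_equiv _ e.toEquiv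
      exact Set.finite_coe_iff.mp h2
    · exact iso_latticeOrder e (gsc_latticeOrder fun a b => finite_glb a b)
    · exact iso_simple e gsc_simple
    · exact iso_atomistic e gsc_atomistic

end GSc
end GSwork

lemma embBot {α β : Type u} [SemilatticeSup α] [OrderBot α] [SemilatticeSup β] [OrderBot β]
    {f : α → β} (hf : IsSupBotEmb f) : ∀ x : α, f x = ⊥ ↔ x = ⊥ :=
  fun x => ⟨fun e => hf.1 (e.trans hf.2.2.symm), fun e => by rw [e]; exact hf.2.2⟩


/-- There is a functorial retraction `⟨GS, ε, μ⟩` of the category of `⟨∨,0⟩`-semilattices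
with `⟨∨,0⟩`-embeddings to the full subcategory of ultra-simple-atomistic
`⟨∨,0⟩`-semilattices; moreover `GS` sends finite lattices to finite lattice-simple
lattices. -/
theorem stmt3 : ∃ (GS : SL.{u} → SL.{u})
    (GSm : ∀ {K L : SL.{u}} (f : K → L), IsSupBotEmb f → ((GS K) → (GS L)))
    (ε : ∀ K : SL.{u}, K → GS K) (μ : ∀ K : SL.{u}, GS K → K),
    (∀ K : SL.{u}, UltraSimpleAtomistic (GS K).carrier) ∧
    (∀ K : SL.{u}, IsSupBotEmb (ε K)) ∧
    (∀ K : SL.{u}, IsSupBotHom (μ K)) ∧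
    (∀ K : SL.{u}, μ K ∘ ε K = id) ∧
    (∀ (K L : SL.{u}) (f : K → L) (hf : IsSupBotEmb f), IsSupBotEmb (GSm f hf)) ∧
    (∀ (K : SL.{u}) (h : IsSupBotEmb (id : K → K)), GSm id h = id) ∧
    (∀ (K L M : SL.{u}) (f : K → L) (g : L → M) (hf : IsSupBotEmb f)
      (hg : IsSupBotEmb g) (hgf : IsSupBotEmb (g ∘ f)),
      GSm (g ∘ f) hgf = GSm g hg ∘ GSm f hf) ∧
    (∀ (K L : SL.{u}) (f : K → L) (hf : IsSupBotEmb f), GSm f hf ∘ ε K = ε L ∘ f) ∧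
    (∀ (K L : SL.{u}) (f : K → L) (hf : IsSupBotEmb f), μ L ∘ GSm f hf = f ∘ μ K) ∧
    (∀ K : SL.{u}, Finite K.carrier → (∀ a b : K.carrier, ∃ m, IsGLB {a, b} m) →
      Finite (GS K).carrier ∧ IsLatticeOrder (GS K).carrier ∧
        OrderLatticeSimple (GS K).carrier) := by
  classical
  refine ⟨fun K => ⟨GSwork.GSc K.carrier⟩,
    fun {K L} f hf => GSwork.GSc.gmap f (embBot hf),
    fun K x => GSwork.GSc.el x,
    fun K => GSwork.GSc.gmu,
    fun K => GSwork.GSc.gsc_ultra,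
    fun K => ⟨fun a b e => by injection e, fun a b => rfl, rfl⟩,
    fun K => ⟨GSwork.GSc.gmu_sup, rfl⟩,
    fun K => rfl,
    fun K L f hf => ⟨GSwork.GSc.gmap_inj hf.1 _, GSwork.GSc.gmap_sup hf.1 hf.2.1 _, ?_⟩,
    fun K h => GSwork.GSc.gmap_id _,
    fun K L M f g hf hg hgf =>
      GSwork.GSc.gmap_comp (embBot hf) (embBot hg) (embBot hgf),
    fun K L f hf => rfl,
    fun K L f hf => funext fun z => GSwork.GSc.gmu_gmap (embBot hf) z,
    fun K hfin hm => ?_⟩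
  · show GSwork.GSc.el (f ⊥) = GSwork.GSc.el ⊥
    rw [hf.2.2]
  · haveI : Finite K.carrier := hfin
    exact ⟨GSwork.GSc.gsc_finite, GSwork.GSc.gsc_latticeOrder hm, GSwork.GSc.gsc_simple⟩
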